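/- arXiv:1407.6681 — 2 statements merged into one kernel-verified Lean document; each statement's English description precedes it below -/
import Mathlib

section
/- Any isomorphism between finite induced subgraphs of a countable graph with property (*₂) extends to an automorphism of the whole graph (homogeneity of the random graph). -/
set_option linter.unusedSectionVars false

/-- Property `(*₂)`: for every pair of finite disjoint sets `U`, `W` of vertices there is a
vertex `z` outside `U ∪ W` adjacent to all vertices in `U` and to none in `W`. -/
def ExtTwo {V : Type*} (G : SimpleGraph V) : Prop :=
  ∀ U W : Finset V, Disjoint U W →
    ∃ z, z ∉ U ∧ z ∉ W ∧ (∀ u ∈ U, G.Adj z u) ∧ (∀ w ∈ W, ¬ G.Adj z w)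

section Aux

variable {V : Type*} [DecidableEq V] {G : SimpleGraph V}

/-- A finite partial isomorphism of `G`. -/
structure PIso (G : SimpleGraph V) where
  S : Finset V
  f : V → V
  inj : Set.InjOn f S
  adj : ∀ a ∈ S, ∀ b ∈ S, G.Adj (f a) (f b) ↔ G.Adj a b

namespace PIso

def Le (p q : PIso G) : Prop := p.S ⊆ q.S ∧ ∀ a ∈ p.S, q.f a = p.f a

lemma Le.refl (p : PIso G) : p.Le p := ⟨subset_rfl, fun _ _ => rfl⟩

lemma Le.trans {p q r : PIso G} (h1 : p.Le q) (h2 : q.Le r) : p.Le r :=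
  ⟨h1.1.trans h2.1, fun a ha => (h2.2 a (h1.1 ha)).trans (h1.2 a ha)⟩

/-- Extending a partial isomorphism by one new pair `v ↦ z`. -/
lemma extend (p : PIso G) (v z : V) (hv : v ∉ p.S) (hz : ∀ a ∈ p.S, p.f a ≠ z)
    (hadj : ∀ b ∈ p.S, (G.Adj z (p.f b) ↔ G.Adj v b)) :
    ∃ q : PIso G, p.Le q ∧ v ∈ q.S ∧ q.f v = z := by
  have hne : ∀ a ∈ p.S, a ≠ v := fun a ha hav => hv (hav ▸ ha)
  refine ⟨⟨insert v p.S, Function.update p.f v z, ?_, ?_⟩,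
    ⟨Finset.subset_insert _ _, fun a ha => Function.update_of_ne (hne a ha) _ _⟩,
    Finset.mem_insert_self _ _, Function.update_self _ _ _⟩
  · intro a ha b hb hab
    simp only [Finset.coe_insert, Set.mem_insert_iff, Finset.mem_coe] at ha hb
    rcases ha with ha' | ha' <;> rcases hb with hb' | hb'
    · rw [ha', hb']
    · rw [ha', Function.update_self] at hab
      rw [Function.update_of_ne (hne b hb')] at hab
      exact absurd hab.symm (hz b hb')
    · rw [hb', Function.update_self] at hab
      rw [Function.update_of_ne (hne a ha')] at hab
      exact absurd hab (hz a ha')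
    · rw [Function.update_of_ne (hne a ha'), Function.update_of_ne (hne b hb')] at hab
      exact p.inj ha' hb' hab
  · intro a ha b hb
    rcases Finset.mem_insert.mp ha with ha' | ha' <;>
      rcases Finset.mem_insert.mp hb with hb' | hb'
    · rw [ha', hb', Function.update_self]
      simp
    · rw [ha', Function.update_self, Function.update_of_ne (hne b hb')]
      exact hadj b hb'
    · rw [hb', Function.update_self, Function.update_of_ne (hne a ha'),
        G.adj_comm (p.f a) z, G.adj_comm a v]
      exact hadj a ha'
    · rw [Function.update_of_ne (hne a ha'), Function.update_of_ne (hne b hb')]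
      exact p.adj a ha' b hb'

open Classical in
/-- Forth step. -/
lemma forth (h : ExtTwo G) (p : PIso G) (v : V) :
    ∃ q : PIso G, p.Le q ∧ v ∈ q.S := by
  by_cases hv : v ∈ p.S
  · exact ⟨p, Le.refl p, hv⟩
  have hdisj : Disjoint ((p.S.filter (G.Adj v)).image p.f)
      ((p.S.filter (fun s => ¬ G.Adj v s)).image p.f) := by
    rw [Finset.disjoint_left]
    rintro x hx hx'
    obtain ⟨a, ha, rfl⟩ := Finset.mem_image.mp hx
    obtain ⟨b, hb, hab⟩ := Finset.mem_image.mp hx'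
    obtain ⟨ha1, ha2⟩ := Finset.mem_filter.mp ha
    obtain ⟨hb1, hb2⟩ := Finset.mem_filter.mp hb
    exact hb2 (p.inj hb1 ha1 hab ▸ ha2)
  obtain ⟨z, hz1, hz2, hzU, hzW⟩ := h _ _ hdisj
  have himg : ∀ a ∈ p.S, p.f a ≠ z := by
    intro a ha hfa
    by_cases hadj : G.Adj v a
    · exact hz1 (hfa ▸ Finset.mem_image.mpr ⟨a, Finset.mem_filter.mpr ⟨ha, hadj⟩, rfl⟩)
    · exact hz2 (hfa ▸ Finset.mem_image.mpr ⟨a, Finset.mem_filter.mpr ⟨ha, hadj⟩, rfl⟩)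
  have hadjz : ∀ b ∈ p.S, (G.Adj z (p.f b) ↔ G.Adj v b) := by
    intro b hb
    constructor
    · intro hzb
      by_contra hvb
      exact hzW _ (Finset.mem_image.mpr ⟨b, Finset.mem_filter.mpr ⟨hb, hvb⟩, rfl⟩) hzb
    · intro hvb
      exact hzU _ (Finset.mem_image.mpr ⟨b, Finset.mem_filter.mpr ⟨hb, hvb⟩, rfl⟩)
  obtain ⟨q, hq1, hq2, -⟩ := p.extend v z hv himg hadjz
  exact ⟨q, hq1, hq2⟩

open Classical in
/-- Back step. -/
lemma back (h : ExtTwo G) (p : PIso G) (v : V) :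
    ∃ q : PIso G, p.Le q ∧ v ∈ q.S.image q.f := by
  by_cases hv : v ∈ p.S.image p.f
  · exact ⟨p, Le.refl p, hv⟩
  have hdisj : Disjoint (p.S.filter (fun s => G.Adj v (p.f s)))
      (p.S.filter (fun s => ¬ G.Adj v (p.f s))) := by
    rw [Finset.disjoint_left]
    rintro x hx hx'
    exact (Finset.mem_filter.mp hx').2 (Finset.mem_filter.mp hx).2
  obtain ⟨w, hw1, hw2, hwU, hwW⟩ := h _ _ hdisj
  have hwS : w ∉ p.S := by
    intro hw
    by_cases hadj : G.Adj v (p.f w)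
    · exact hw1 (Finset.mem_filter.mpr ⟨hw, hadj⟩)
    · exact hw2 (Finset.mem_filter.mpr ⟨hw, hadj⟩)
  have himg : ∀ a ∈ p.S, p.f a ≠ v := by
    intro a ha hfa
    exact hv (hfa ▸ Finset.mem_image.mpr ⟨a, ha, rfl⟩)
  have hadjw : ∀ b ∈ p.S, (G.Adj v (p.f b) ↔ G.Adj w b) := by
    intro b hb
    constructor
    · intro hvb
      exact hwU _ (Finset.mem_filter.mpr ⟨hb, hvb⟩)
    · intro hwb
      by_contra hvb
      exact hwW _ (Finset.mem_filter.mpr ⟨hb, hvb⟩) hwb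
  obtain ⟨q, hq1, hq2, hq3⟩ := p.extend w v hwS himg hadjw
  exact ⟨q, hq1, Finset.mem_image.mpr ⟨w, hq2, hq3⟩⟩

end PIso

end Aux

/-- Homogeneity of the random graph: any isomorphism between finite induced subgraphs of a
countable graph with property `(*₂)` extends to an automorphism of the whole graph. -/
theorem extTwo_homogeneous {V : Type*} [Countable V] (G : SimpleGraph V) (h : ExtTwo G)
    (A B : Finset V) (φ : G.induce (A : Set V) ≃g G.induce (B : Set V)) :
    ∃ ψ : G ≃g G, ∀ (a : V) (ha : a ∈ (A : Set V)), ψ a = (φ ⟨a, ha⟩ : V) := by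
  classical
  have hne : Nonempty V := by
    obtain ⟨z, -⟩ := h ∅ ∅ (by simp)
    exact ⟨z⟩
  obtain ⟨e, he⟩ := exists_surjective_nat V
  -- initial partial isomorphism
  set f0 : V → V := fun a => if ha : a ∈ A then (φ ⟨a, ha⟩ : V) else a with hf0
  have hf0A : ∀ a (ha : a ∈ A), f0 a = (φ ⟨a, ha⟩ : V) := fun a ha => dif_pos ha
  have hinj0 : Set.InjOn f0 (A : Finset V) := by
    intro a ha b hb hab
    simp only [Finset.mem_coe] at ha hb
    rw [hf0A a ha, hf0A b hb] at hab
    have := φ.injective (Subtype.val_injective hab)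
    exact congrArg Subtype.val this
  have hadj0 : ∀ a ∈ A, ∀ b ∈ A, G.Adj (f0 a) (f0 b) ↔ G.Adj a b := by
    intro a ha b hb
    rw [hf0A a ha, hf0A b hb]
    have := φ.map_adj_iff (v := ⟨a, ha⟩) (w := ⟨b, hb⟩)
    simpa using this
  let p0 : PIso G := ⟨A, f0, hinj0, hadj0⟩
  -- the chain
  let step : ℕ → PIso G → PIso G := fun n p =>
    (PIso.back h ((PIso.forth h p (e n)).choose) (e n)).choose
  let c : ℕ → PIso G := fun n => Nat.rec p0 step n
  have hstep : ∀ n, (c n).Le (c (n+1)) ∧ e n ∈ (c (n+1)).S ∧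
      e n ∈ (c (n+1)).S.image (c (n+1)).f := by
    intro n
    have h1 := (PIso.forth h (c n) (e n)).choose_spec
    have h2 := (PIso.back h ((PIso.forth h (c n) (e n)).choose) (e n)).choose_spec
    exact ⟨h1.1.trans h2.1, h2.1.1 h1.2, h2.2⟩
  have hmono : ∀ m n, m ≤ n → (c m).Le (c n) := by
    intro m n hmn
    induction n with
    | zero => exact Nat.le_zero.mp hmn ▸ PIso.Le.refl _
    | succ k ih =>
      rcases Nat.lt_or_ge m (k+1) with hlt | hge
      · exact (ih (Nat.lt_succ_iff.mp hlt)).trans (hstep k).1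
      · exact (Nat.le_antisymm hmn hge) ▸ PIso.Le.refl _
  have hmem : ∀ v, ∃ n, v ∈ (c n).S := by
    intro v
    obtain ⟨n, rfl⟩ := he v
    exact ⟨n+1, (hstep n).2.1⟩
  let d : V → ℕ := fun v => (hmem v).choose
  let F : V → V := fun v => (c (d v)).f v
  have hFspec : ∀ v n, v ∈ (c n).S → F v = (c n).f v := by
    intro v n hvn
    have hd : v ∈ (c (d v)).S := (hmem v).choose_spec
    rcases Nat.le_total (d v) n with hle | hle
    · exact ((hmono _ _ hle).2 v hd).symm
    · exact (hmono _ _ hle).2 v hvn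
  have hFinj : Function.Injective F := by
    intro a b hab
    obtain ⟨m, hm⟩ := hmem a
    obtain ⟨n, hn⟩ := hmem b
    have hm' : a ∈ (c (max m n)).S := (hmono m _ (le_max_left m n)).1 hm
    have hn' : b ∈ (c (max m n)).S := (hmono n _ (le_max_right m n)).1 hn
    rw [hFspec a _ hm', hFspec b _ hn'] at hab
    exact (c (max m n)).inj hm' hn' hab
  have hFsurj : Function.Surjective F := by
    intro v
    obtain ⟨n, rfl⟩ := he v
    obtain ⟨w, hw, hfw⟩ := Finset.mem_image.mp (hstep n).2.2
    exact ⟨w, (hFspec w (n+1) hw).trans hfw⟩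
  have hFadj : ∀ a b, G.Adj (F a) (F b) ↔ G.Adj a b := by
    intro a b
    obtain ⟨m, hm⟩ := hmem a
    obtain ⟨n, hn⟩ := hmem b
    have hm' : a ∈ (c (max m n)).S := (hmono m _ (le_max_left m n)).1 hm
    have hn' : b ∈ (c (max m n)).S := (hmono n _ (le_max_right m n)).1 hn
    rw [hFspec a _ hm', hFspec b _ hn']
    exact (c (max m n)).adj a hm' b hn'
  refine ⟨⟨Equiv.ofBijective F ⟨hFinj, hFsurj⟩, ?_⟩, ?_⟩
  · intro a b
    exact hFadj a b
  · intro a ha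
    have hc0 : a ∈ (c 0).S := by
      show a ∈ A
      exact ha
    have hF0 : F a = (c 0).f a := hFspec a 0 hc0
    have h2 : (c 0).f a = f0 a := rfl
    show F a = (φ ⟨a, ha⟩ : V)
    rw [hF0, h2, hf0A a ha]
end

section
/- If a countable graph Γ has the property that every finite vertex set has a common neighbour, then Γ contains the random graph R as a spanning subgraph, i.e. there is a graph Δ on the same vertex set with edge set contained in that of Γ such that Δ satisfies property (*₂). -/
/-- Auxiliary: the set of "touched" vertices before stage `n`. -/
noncomputable def touchedAux {V : Type*} [DecidableEq V] (e : ℕ → Finset V × Finset V)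
    (pick : Finset V → V) : ℕ → Finset V
  | 0 => ∅
  | n + 1 =>
      (touchedAux e pick n ∪ (e n).1 ∪ (e n).2) ∪
        {pick (touchedAux e pick n ∪ (e n).1 ∪ (e n).2)}

/-- If every finite vertex set of a countable graph `Γ` has a common neighbour, then `Γ`
contains the random graph as a spanning subgraph: there is a graph `Δ` on the same vertex
set, with edge set contained in that of `Γ`, satisfying property `(*₂)`. -/
theorem spanning_random_subgraph {V : Type*} [Countable V] (G : SimpleGraph V)
    (h : ∀ F : Finset V, ∃ z, ∀ v ∈ F, G.Adj z v) :
    ∃ Δ : SimpleGraph V, Δ ≤ G ∧ ExtTwo Δ := by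
  classical
  obtain ⟨e, he⟩ := exists_surjective_nat (Finset V × Finset V)
  set pick : Finset V → V := fun S => (h S).choose with hpickdef
  have hpick : ∀ S : Finset V, ∀ v ∈ S, G.Adj (pick S) v := fun S => (h S).choose_spec
  set T : ℕ → Finset V := touchedAux e pick with hT
  set z : ℕ → V := fun n => pick (T n ∪ (e n).1 ∪ (e n).2) with hz
  have hTsucc : ∀ n, T (n + 1) = (T n ∪ (e n).1 ∪ (e n).2) ∪ {z n} := by
    intro n; rfl
  have hadj : ∀ n, ∀ v ∈ T n ∪ (e n).1 ∪ (e n).2, G.Adj (z n) v := by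
    intro n v hv; exact hpick _ v hv
  have hznotin : ∀ n, z n ∉ T n ∪ (e n).1 ∪ (e n).2 := by
    intro n hn
    exact G.loopless.irrefl _ (hadj n _ hn)
  have hmono : ∀ m n, m ≤ n → T m ⊆ T n := by
    intro m n hmn
    induction n with
    | zero =>
        have : m = 0 := Nat.le_zero.mp hmn
        subst this; exact Finset.Subset.refl _
    | succ k ih =>
        rcases Nat.lt_or_ge m (k + 1) with hlt | hge
        · refine (ih (Nat.lt_succ_iff.mp hlt)).trans ?_
          rw [hTsucc k]
          intro x hx
          simp only [Finset.mem_union, Finset.mem_singleton]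
          tauto
        · have hEq : m = k + 1 := le_antisymm hmn hge
          subst hEq; exact Finset.Subset.refl _
  have hstep : ∀ k, T k ∪ (e k).1 ∪ (e k).2 ∪ {z k} ⊆ T (k + 1) := by
    intro k; rw [hTsucc k]
  have hin : ∀ k n, k < n →
      (e k).1 ⊆ T n ∧ (e k).2 ⊆ T n ∧ z k ∈ T n := by
    intro k n hkn
    have hsub : T (k + 1) ⊆ T n := hmono _ _ hkn
    refine ⟨?_, ?_, ?_⟩
    · intro x hx
      exact hsub (hstep k (by simp [hx]))
    · intro x hx
      exact hsub (hstep k (by simp [hx]))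
    · exact hsub (hstep k (by simp))
  -- the relation defining Δ
  set r : V → V → Prop := fun x y => ∃ n, x = z n ∧ y ∈ (e n).1 with hr
  refine ⟨SimpleGraph.fromRel r, ?_, ?_⟩
  · intro x y hxy
    obtain ⟨hne, hor⟩ := hxy
    rcases hor with ⟨n, rfl, hy⟩ | ⟨n, rfl, hx⟩
    · exact hadj n y (by simp [hy])
    · exact (hadj n x (by simp [hx])).symm
  · intro U W hUW
    obtain ⟨n, hn⟩ := he (U, W)
    have hU : (e n).1 = U := by rw [hn]
    have hW : (e n).2 = W := by rw [hn]
    refine ⟨z n, ?_, ?_, ?_, ?_⟩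
    · intro hmem
      exact hznotin n (by simp [hU, hmem])
    · intro hmem
      exact hznotin n (by simp [hW, hmem])
    · intro u hu
      have hne : z n ≠ u := by
        intro hEq
        exact hznotin n (by simp [hU, hEq ▸ hu])
      exact ⟨hne, Or.inl ⟨n, rfl, hU ▸ hu⟩⟩
    · intro w hw hadjw
      obtain ⟨hne, hor⟩ := hadjw
      have memT : ∀ k, ∀ x ∈ T k, x ∈ T k ∪ (e k).1 ∪ (e k).2 := by
        intro k x hx
        exact Finset.mem_union_left _ (Finset.mem_union_left _ hx)
      rcases hor with ⟨m, hzm, hwm⟩ | ⟨m, hwm, hzm⟩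
      · -- hzm : z n = z m, hwm : w ∈ (e m).1
        rcases lt_trichotomy m n with hlt | hEq | hlt
        · have h1 : z m ∈ T n := (hin m n hlt).2.2
          rw [← hzm] at h1
          exact hznotin n (memT n _ h1)
        · subst hEq
          exact (Finset.disjoint_left.mp hUW (hU ▸ hwm) hw).elim
        · have h1 : z n ∈ T m := (hin n m hlt).2.2
          rw [hzm] at h1
          exact hznotin m (memT m _ h1)
      · -- hwm : w = z m, hzm : z n ∈ (e m).1
        rcases lt_trichotomy m n with hlt | hEq | hlt
        · have h1 : z n ∈ T n := (hin m n hlt).1 hzm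
          exact hznotin n (memT n _ h1)
        · subst hEq
          exact hznotin m (Finset.mem_union_left _ (Finset.mem_union_right _ hzm))
        · have h1 : w ∈ T m := (hin n m hlt).2.1 (hW ▸ hw)
          rw [hwm] at h1
          exact hznotin m (memT m _ h1)
end
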